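/- Let K be an algebraically closed field, P a 2-dimensional K-vector space with basis {p₁, p₂}, U a nonzero finite-dimensional K-vector space, V := P ⊕ U, r > 1 an integer, S a linear subspace of V^{⊗r}, and γ = (γ₁, …, γ₆) a tuple of six pairwise distinct elements of K ∖ {0, 1}. Let D := ⟨e⟩ ⊕ ⟨b⟩ ⊕ ⟨c⟩ ⊕ ⟨d⟩ ⊕ A(V,S) be the algebra with multiplication determined by conditions (D1)–(D4) below. Then the only idempotents of D (elements x with x·x = x) are 0 and e. -/

import Mathlib

open scoped TensorProduct DirectSum

noncomputable section
set_option maxSynthPendingDepth 2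

variable (K V : Type*) [Field K] [AddCommGroup V] [Module K V]

theorem mul_comp_eq_zero {a b : ℕ} {x y : ⨁ n : ℕ, ⨂[K]^n V}
    (hx : ∀ i < a, x i = 0) (hy : ∀ j < b, y j = 0) {k : ℕ} (hk : k < a + b) :
    (x * y) k = 0 := by
  classical
  rw [DirectSum.mul_eq_dfinsuppSum, DFinsupp.sum_apply, DFinsupp.sum]
  apply Finset.sum_eq_zero
  intro i hi
  rw [DFinsupp.sum_apply, DFinsupp.sum]
  apply Finset.sum_eq_zero
  intro j hj
  have hi' : a ≤ i := by
    by_contra h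
    exact (DFinsupp.mem_support_iff.mp hi) (hx i (by omega))
  have hj' : b ≤ j := by
    by_contra h
    exact (DFinsupp.mem_support_iff.mp hj) (hy j (by omega))
  exact DirectSum.of_eq_of_ne _ _ _ (by omega)

/-- The positive-degree part `T(V)₊ = ⊕_{i ≥ 1} V^{⊗i}` of the tensor algebra. -/
def Tplus : Submodule K (⨁ n : ℕ, ⨂[K]^n V) :=
  LinearMap.ker (DirectSum.component K ℕ (fun n => ⨂[K]^n V) 0)

theorem mem_Tplus_iff (x : ⨁ n : ℕ, ⨂[K]^n V) : x ∈ Tplus K V ↔ x 0 = 0 :=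
  Iff.rfl

theorem mul_mem_Tplus (x y : ⨁ n : ℕ, ⨂[K]^n V)
    (hx : x ∈ Tplus K V) : x * y ∈ Tplus K V := by
  rw [mem_Tplus_iff] at *
  exact mul_comp_eq_zero K V (a := 1) (b := 0)
    (fun i hi => by interval_cases i; exact hx) (fun j hj => by omega) (by omega)


theorem mul_mem_Tplus' (x y : ⨁ n : ℕ, ⨂[K]^n V)
    (hy : y ∈ Tplus K V) : x * y ∈ Tplus K V := by
  rw [mem_Tplus_iff] at *
  exact mul_comp_eq_zero K V (a := 0) (b := 1)
    (fun i hi => by omega) (fun j hj => by interval_cases j; exact hy) (by omega)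

/-- The multiplication of `T(V)₊`, as a bilinear map. -/
def mulTplus : ↥(Tplus K V) →ₗ[K] ↥(Tplus K V) →ₗ[K] ↥(Tplus K V) :=
  LinearMap.mk₂ K (fun x y => ⟨x.1 * y.1, mul_mem_Tplus K V x.1 y.1 x.2⟩)
    (fun m n p => Subtype.ext (by push_cast; exact add_mul _ _ _))
    (fun c m p => Subtype.ext (by push_cast; exact smul_mul_assoc c _ _))
    (fun m n p => Subtype.ext (by push_cast; exact mul_add _ _ _))
    (fun c m p => Subtype.ext (by push_cast; exact mul_smul_comm c _ _))

variable (r : ℕ) (S : Submodule K (⨂[K]^r V))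

/-- The ideal `I(S) = S ⊕ (⊕_{i > r} V^{⊗i})` of `T(V)₊`, as a submodule of `T(V)₊`. -/
def Imod : Submodule K ↥(Tplus K V) where
  carrier := {x | x.1 r ∈ S ∧ ∀ i < r, x.1 i = 0}
  add_mem' := by
    rintro x y ⟨hxr, hx⟩ ⟨hyr, hy⟩
    refine ⟨?_, fun i hi => ?_⟩
    · show (x.1 + y.1) r ∈ S
      rw [DirectSum.add_apply]
      exact S.add_mem hxr hyr
    · show (x.1 + y.1) i = 0
      rw [DirectSum.add_apply, hx i hi, hy i hi, add_zero]
  zero_mem' := ⟨by simp, fun i hi => by simp⟩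
  smul_mem' := by
    rintro c x ⟨hxr, hx⟩
    refine ⟨?_, fun i hi => ?_⟩
    · show (c • x.1) r ∈ S
      rw [DFinsupp.smul_apply]
      exact S.smul_mem c hxr
    · show (c • x.1) i = 0
      rw [DFinsupp.smul_apply, hx i hi, smul_zero]

/-- The algebra `A(V, S) = T(V)₊ / I(S)`, as a vector space. -/
abbrev AVS := ↥(Tplus K V) ⧸ (Imod K V r S)

theorem left_absorb (_hr : 1 < r) (x : ↥(Tplus K V)) (hx : x ∈ Imod K V r S)
    (y : ↥(Tplus K V)) : mulTplus K V x y ∈ Imod K V r S := by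
  obtain ⟨hxr, hx'⟩ := hx
  have h : ∀ k < r + 1, (x.1 * y.1) k = 0 :=
    fun k hk => mul_comp_eq_zero K V (a := r) (b := 1) hx'
      (fun j hj => by interval_cases j; exact y.2) hk
  exact ⟨by rw [show (mulTplus K V x y).1 = x.1 * y.1 from rfl, h r (by omega)]; exact S.zero_mem,
    fun i hi => by rw [show (mulTplus K V x y).1 = x.1 * y.1 from rfl, h i (by omega)]⟩

theorem right_absorb (_hr : 1 < r) (x : ↥(Tplus K V)) (y : ↥(Tplus K V))
    (hy : y ∈ Imod K V r S) : mulTplus K V x y ∈ Imod K V r S := by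
  obtain ⟨hyr, hy'⟩ := hy
  have h : ∀ k < r + 1, (x.1 * y.1) k = 0 := fun k hk =>
    mul_comp_eq_zero K V (a := 1) (b := r)
      (fun j hj => by interval_cases j; exact x.2) hy' (by omega)
  exact ⟨by rw [show (mulTplus K V x y).1 = x.1 * y.1 from rfl, h r (by omega)]; exact S.zero_mem,
    fun i hi => by rw [show (mulTplus K V x y).1 = x.1 * y.1 from rfl, h i (by omega)]⟩


theorem hker1 (hr : 1 < r) :
    Imod K V r S ≤ LinearMap.ker ((mulTplus K V).compr₂ (Imod K V r S).mkQ) := by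
  intro x hx
  rw [LinearMap.mem_ker]
  ext y
  simp only [LinearMap.compr₂_apply, LinearMap.zero_apply, Submodule.mkQ_apply,
    Submodule.Quotient.mk_eq_zero]
  exact left_absorb K V r S hr x hx y

/-- Partially descended multiplication. -/
def mulQ1 (hr : 1 < r) : AVS K V r S →ₗ[K] ↥(Tplus K V) →ₗ[K] AVS K V r S :=
  (Imod K V r S).liftQ ((mulTplus K V).compr₂ (Imod K V r S).mkQ) (hker1 K V r S hr)

theorem hker2 (hr : 1 < r) :
    Imod K V r S ≤ LinearMap.ker (mulQ1 K V r S hr).flip := by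
  intro y hy
  rw [LinearMap.mem_ker]
  ext x
  show mulQ1 K V r S hr (Submodule.Quotient.mk x) y = 0
  rw [mulQ1, Submodule.liftQ_apply]
  simp only [LinearMap.compr₂_apply, Submodule.mkQ_apply, Submodule.Quotient.mk_eq_zero]
  exact right_absorb K V r S hr x y hy

/-- The multiplication of the algebra `A(V, S)`, as a bilinear map. -/
def mulAVS (hr : 1 < r) : AVS K V r S →ₗ[K] AVS K V r S →ₗ[K] AVS K V r S :=
  ((Imod K V r S).liftQ (mulQ1 K V r S hr).flip (hker2 K V r S hr)).flip

theorem mulAVS_mk (hr : 1 < r) (x y : ↥(Tplus K V)) :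
    mulAVS K V r S hr (Submodule.Quotient.mk x) (Submodule.Quotient.mk y) =
      Submodule.Quotient.mk (mulTplus K V x y) := by
  rw [mulAVS]
  simp only [LinearMap.flip_apply, Submodule.liftQ_apply, mulQ1, LinearMap.compr₂_apply,
    Submodule.mkQ_apply]

/-- The canonical linear embedding `V → T(V)₊` in degree `1`. -/
def iotaTplus : V →ₗ[K] ↥(Tplus K V) :=
  LinearMap.codRestrict (Tplus K V)
    ((DirectSum.lof K ℕ (fun n => ⨂[K]^n V) 1) ∘ₗ
      (PiTensorProduct.subsingletonEquiv (s := fun _ : Fin 1 => V) (0 : Fin 1)).symm.toLinearMap)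
    (fun v => by
      rw [mem_Tplus_iff]
      exact DirectSum.of_eq_of_ne _ _ _ (by omega))

/-- The canonical map `V → A(V, S)` (injective since `1 < r`). -/
def iotaAVS : V →ₗ[K] AVS K V r S :=
  (Imod K V r S).mkQ ∘ₗ iotaTplus K V


/-- The projection of `A(V, S)` onto its degree-one component `V` (defined for `1 < r`). -/
def piV (hr : 1 < r) : AVS K V r S →ₗ[K] V :=
  (Imod K V r S).liftQ
    ((PiTensorProduct.subsingletonEquiv (0 : Fin 1)).toLinearMap ∘ₗ
      (DirectSum.component K ℕ (fun n => ⨂[K]^n V) 1) ∘ₗ (Tplus K V).subtype)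
    (by
      intro x hx
      rw [LinearMap.mem_ker]
      show (PiTensorProduct.subsingletonEquiv (0 : Fin 1)) (x.1 1) = 0
      rw [hx.2 1 hr, map_zero])

end

noncomputable section
set_option maxSynthPendingDepth 2

variable (K P U : Type*) [Field K] [AddCommGroup P] [Module K P]
  [AddCommGroup U] [Module K U]
variable (r : ℕ) (S : Submodule K (⨂[K]^r (P × U))) (hr : 1 < r)

/-- The underlying vector space of the algebra `D = ⟨e⟩ ⊕ ⟨b⟩ ⊕ ⟨c⟩ ⊕ ⟨d⟩ ⊕ A(V,S)`,
where `V = P ⊕ U`; the four scalar coordinates are those of `e`, `b`, `c`, `d`. -/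
abbrev Dspace := K × K × K × K × AVS K (P × U) r S

/-- The canonical map `P → A(V, S)`, `V = P ⊕ U`. -/
def iotaP : P →ₗ[K] AVS K (P × U) r S :=
  iotaAVS K (P × U) r S ∘ₗ LinearMap.inl K P U

/-- The canonical map `U → A(V, S)`, `V = P ⊕ U`. -/
def iotaU : U →ₗ[K] AVS K (P × U) r S :=
  iotaAVS K (P × U) r S ∘ₗ LinearMap.inr K P U

/-- The `P`-component of the degree-one part of an element of `A(V, S)`, as an element
of `A(V, S)`. -/
def aP (hr : 1 < r) : AVS K (P × U) r S →ₗ[K] AVS K (P × U) r S :=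
  iotaP K P U r S ∘ₗ LinearMap.fst K P U ∘ₗ piV K (P × U) r S hr

/-- The `U`-component of the degree-one part of an element of `A(V, S)`, as an element
of `A(V, S)`. -/
def aU (hr : 1 < r) : AVS K (P × U) r S →ₗ[K] AVS K (P × U) r S :=
  iotaU K P U r S ∘ₗ LinearMap.snd K P U ∘ₗ piV K (P × U) r S hr

variable (p1 p2 : P) (gam : Fin 6 → K)

set_option maxHeartbeats 2000000 in
/-- The multiplication of the algebra `D(P, U, S, γ)`, determined by the conditions
(D1)–(D4): `e` (the first coordinate) is a left identity; right multiplication by `e` acts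
with eigenvalue `γ₁, γ₂, γ₃` on `b, c, d` (the next three coordinates), `γ₄` on `P`, `γ₅` on
`U` and `γ₆` on the part of `A(V,S)` of degrees `≥ 2`; the multiplication table (D3) for
`b, c, d` (with `γ_{bc} = (γ₂ - γ₁)/(γ₂ - γ₃)`); products between `⟨b,c,d⟩` and `A(V,S)`
vanish, and products inside `A(V,S)` are those of `A(V,S)`. -/
def mulD (hr : 1 < r) : Dspace K P U r S →ₗ[K] Dspace K P U r S →ₗ[K] Dspace K P U r S :=
  LinearMap.mk₂ K
    (fun x y =>
      (x.1 * y.1 + x.2.2.1 * y.2.2.2.1,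
       x.1 * y.2.1 + gam 0 * (x.2.1 * y.1) +
         ((gam 1 - gam 0) / (gam 1 - gam 2)) * (x.2.1 * y.2.2.1) + x.2.2.1 * y.2.2.1,
       x.1 * y.2.2.1 + x.2.1 * y.2.2.1 + gam 1 * (x.2.2.1 * y.1) - x.2.2.1 * y.2.1,
       x.1 * y.2.2.2.1 + gam 2 * (x.2.2.2.1 * y.1) + x.2.2.2.1 * y.2.2.1,
       x.1 • y.2.2.2.2 + (x.2.2.2.1 * y.2.1) • iotaP K P U r S p1 +
         (x.2.2.2.1 * y.2.2.2.1) • iotaP K P U r S p2 +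
         y.1 • (gam 5 • x.2.2.2.2 + (gam 3 - gam 5) • aP K P U r S hr x.2.2.2.2 +
           (gam 4 - gam 5) • aU K P U r S hr x.2.2.2.2) +
         mulAVS K (P × U) r S hr x.2.2.2.2 y.2.2.2.2))
    (by
      intro m n q
      simp only [Prod.fst_add, Prod.snd_add, Prod.mk_add_mk, Prod.mk.injEq, map_add,
        LinearMap.add_apply, smul_add]
      refine ⟨by ring, by ring, by ring, by ring, by module⟩)
    (by
      intro c m q
      simp only [Prod.smul_fst, Prod.smul_snd, Prod.smul_mk, smul_eq_mul, Prod.mk.injEq,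
        map_smul, LinearMap.smul_apply, smul_add]
      refine ⟨by ring, by ring, by ring, by ring, by module⟩)
    (by
      intro m n q
      simp only [Prod.fst_add, Prod.snd_add, Prod.mk_add_mk, Prod.mk.injEq, map_add,
        LinearMap.add_apply, smul_add]
      refine ⟨by ring, by ring, by ring, by ring, by module⟩)
    (by
      intro c m q
      simp only [Prod.smul_fst, Prod.smul_snd, Prod.smul_mk, smul_eq_mul, Prod.mk.injEq,
        map_smul, LinearMap.smul_apply, smul_add]
      refine ⟨by ring, by ring, by ring, by ring, by module⟩)

/-- The left identity `e` of the algebra `D(P, U, S, γ)`. -/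
def eD : Dspace K P U r S := (1, 0, 0, 0, 0)



noncomputable section
set_option maxSynthPendingDepth 2

variable (K V : Type*) [Field K] [AddCommGroup V] [Module K V]
variable (r : ℕ) (S : Submodule K (⨂[K]^r V))

theorem my_piV_mk (hr : 1 < r) (x : ↥(Tplus K V)) :
    piV K V r S hr (Submodule.Quotient.mk x) =
      (PiTensorProduct.subsingletonEquiv (0 : Fin 1)) (x.1 1) := rfl

theorem my_piV_iotaAVS (hr : 1 < r) (v : V) :
    piV K V r S hr (iotaAVS K V r S v) = v := by
  show piV K V r S hr (Submodule.Quotient.mk (iotaTplus K V v)) = v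
  rw [my_piV_mk]
  show (PiTensorProduct.subsingletonEquiv (0 : Fin 1))
      (((DirectSum.lof K ℕ (fun n => ⨂[K]^n V) 1)
        ((PiTensorProduct.subsingletonEquiv (s := fun _ : Fin 1 => V) (0 : Fin 1)).symm v)) 1) = v
  rw [DirectSum.lof_apply, LinearEquiv.apply_symm_apply]

theorem my_piV_mul (hr : 1 < r) (x y : AVS K V r S) :
    piV K V r S hr (mulAVS K V r S hr x y) = 0 := by
  obtain ⟨x', rfl⟩ := Submodule.Quotient.mk_surjective _ x
  obtain ⟨y', rfl⟩ := Submodule.Quotient.mk_surjective _ y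
  rw [mulAVS_mk, my_piV_mk]
  have h : (x'.1 * y'.1) 1 = 0 :=
    mul_comp_eq_zero K V (a := 1) (b := 1)
      (fun i hi => by interval_cases i; exact x'.2)
      (fun j hj => by interval_cases j; exact y'.2) (by omega)
  show (PiTensorProduct.subsingletonEquiv (0 : Fin 1)) ((x'.1 * y'.1) 1) = 0
  rw [h, map_zero]

theorem my_nilpotent (hr : 1 < r) (s : K) (a : AVS K V r S)
    (hp : piV K V r S hr a = 0) (ha : a = s • mulAVS K V r S hr a a) : a = 0 := by
  have key : ∀ n : ℕ, ∃ x : ↥(Tplus K V),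
      a = Submodule.Quotient.mk x ∧ ∀ i ≤ n + 1, x.1 i = 0 := by
    intro n
    induction n with
    | zero =>
      obtain ⟨x, hx⟩ := Submodule.Quotient.mk_surjective _ a
      refine ⟨x, hx.symm, ?_⟩
      have h1 : x.1 1 = 0 := by
        have h := hp
        rw [← hx, my_piV_mk] at h
        exact (LinearEquiv.map_eq_zero_iff _).mp h
      intro i hi
      interval_cases i
      · exact x.2
      · exact h1
    | succ n ih =>
      obtain ⟨x, hxa, hx⟩ := ih
      refine ⟨s • mulTplus K V x x, ?_, ?_⟩
      · conv_lhs => rw [ha]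
        rw [hxa, mulAVS_mk, ← Submodule.Quotient.mk_smul]
      · intro i hi
        show ((s • mulTplus K V x x : ↥(Tplus K V)) : ⨁ n : ℕ, ⨂[K]^n V) i = 0
        have hco : ((s • mulTplus K V x x : ↥(Tplus K V)) : ⨁ n : ℕ, ⨂[K]^n V)
            = s • (x.1 * x.1) := rfl
        rw [hco, DFinsupp.smul_apply,
          mul_comp_eq_zero K V (a := n + 2) (b := n + 2)
            (fun j hj => hx j (by omega)) (fun j hj => hx j (by omega)) (by omega),
          smul_zero]
  obtain ⟨x, hxa, hx⟩ := key r
  rw [hxa, Submodule.Quotient.mk_eq_zero]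
  exact ⟨by rw [hx r (by omega)]; exact S.zero_mem, fun i hi => hx i (by omega)⟩

end

set_option maxHeartbeats 2000000 in
/-- In the algebra `D = D(P, U, S, γ)` (with `{p₁, p₂}` a basis of `P`, `U` nonzero
finite-dimensional, `1 < r`, `S ⊆ (P ⊕ U)^{⊗r}`, and `γ₁, …, γ₆` pairwise distinct elements
of `K \ {0, 1}`), the only idempotents are `0` and the left identity `e`. -/
theorem idempotents_of_D
    [IsAlgClosed K] [Nontrivial U] [FiniteDimensional K P] [FiniteDimensional K U]
    (hbasis : ∃ bP : Module.Basis (Fin 2) K P, bP 0 = p1 ∧ bP 1 = p2)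
    (hγ0 : ∀ i, gam i ≠ 0) (hγ1 : ∀ i, gam i ≠ 1) (hγinj : Function.Injective gam)
    (x : Dspace K P U r S) (hx : mulD K P U r S p1 p2 gam hr x x = x) :
    x = 0 ∨ x = eD K P U r S := by
  obtain ⟨t, b, c, d, a⟩ := x
  rw [mulD] at hx
  simp only [LinearMap.mk₂_apply, Prod.mk.injEq] at hx
  obtain ⟨h1, h2, h3, h4, h5⟩ := hx
  have hne23 : gam 1 - gam 2 ≠ 0 :=
    sub_ne_zero.mpr (fun h => absurd (hγinj h) (by decide))
  by_cases hc : c = 0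
  · subst hc
    have ht : t = 0 ∨ t = 1 := by
      rcases mul_eq_zero.mp (show t * (t - 1) = 0 by linear_combination h1) with h | h
      · exact Or.inl h
      · exact Or.inr (by linear_combination h)
    rcases ht with ht | ht
    · subst ht
      left
      have hb : b = 0 := by linear_combination -h2
      have hd : d = 0 := by linear_combination -h4
      subst hb; subst hd
      simp only [zero_smul, zero_mul, mul_zero, zero_add, add_zero] at h5
      have ha : a = 0 := my_nilpotent K (P × U) r S hr 1 a
        (by rw [← h5]; exact my_piV_mul K (P × U) r S hr a a)
        (by rw [one_smul, h5])
      subst ha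
      rfl
    · subst ht
      right
      have hb : b = 0 := by
        have : gam 0 * b = 0 := by linear_combination h2
        exact (mul_eq_zero.mp this).resolve_left (hγ0 0)
      have hd : d = 0 := by
        have : gam 2 * d = 0 := by linear_combination h4
        exact (mul_eq_zero.mp this).resolve_left (hγ0 2)
      subst hb; subst hd
      simp only [one_smul, zero_mul, mul_zero, zero_smul, add_zero, zero_add] at h5
      have H : gam 5 • a + (gam 3 - gam 5) • aP K P U r S hr a
          + (gam 4 - gam 5) • aU K P U r S hr a + mulAVS K (P × U) r S hr a a = 0 := by
        have := h5
        abel_nf at this ⊢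
        linear_combination (norm := abel_nf) this
      have hpiV : piV K (P × U) r S hr a = 0 := by
        have hH := congrArg (piV K (P × U) r S hr) H
        rw [map_add, map_add, map_add, map_smul, map_smul, map_smul,
          my_piV_mul, map_zero, add_zero] at hH
        have haP : piV K (P × U) r S hr (aP K P U r S hr a)
            = ((piV K (P × U) r S hr a).1, 0) := by
          show piV K (P × U) r S hr (iotaAVS K (P × U) r S
            ((piV K (P × U) r S hr a).1, 0)) = _
          rw [my_piV_iotaAVS]
        have haU : piV K (P × U) r S hr (aU K P U r S hr a)
            = (0, (piV K (P × U) r S hr a).2) := by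
          show piV K (P × U) r S hr (iotaAVS K (P × U) r S
            (0, (piV K (P × U) r S hr a).2)) = _
          rw [my_piV_iotaAVS]
        rw [haP, haU] at hH
        set p := (piV K (P × U) r S hr a).1
        set u := (piV K (P × U) r S hr a).2
        have hfst := congrArg Prod.fst hH
        have hsnd := congrArg Prod.snd hH
        simp only [Prod.fst_add, Prod.snd_add, Prod.smul_mk, Prod.fst_zero, Prod.snd_zero,
          Prod.smul_fst, Prod.smul_snd, smul_zero, add_zero, zero_add] at hfst hsnd
        have hp : p = 0 := by
          have h4p : gam 3 • p = 0 := by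
            rw [← hfst]
            module
          exact (smul_eq_zero.mp h4p).resolve_left (hγ0 3)
        have hu : u = 0 := by
          have h5u : gam 4 • u = 0 := by
            rw [← hsnd]
            module
          exact (smul_eq_zero.mp h5u).resolve_left (hγ0 4)
        exact Prod.ext hp hu
      have haP0 : aP K P U r S hr a = 0 := by
        show iotaP K P U r S ((piV K (P × U) r S hr a).1) = 0
        rw [hpiV]
        exact map_zero _
      have haU0 : aU K P U r S hr a = 0 := by
        show iotaU K P U r S ((piV K (P × U) r S hr a).2) = 0
        rw [hpiV]
        exact map_zero _
      rw [haP0, haU0, smul_zero, smul_zero, add_zero, add_zero] at H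
      have ha : a = (-(gam 5)⁻¹) • mulAVS K (P × U) r S hr a a := by
        have h6 : gam 5 • a = -(mulAVS K (P × U) r S hr a a) := by
          rw [eq_neg_iff_add_eq_zero]; exact H
        rw [neg_smul, ← smul_neg, ← h6, inv_smul_smul₀ (hγ0 5)]
      have ha0 : a = 0 := my_nilpotent K (P × U) r S hr _ a hpiV ha
      subst ha0
      rfl
  · exfalso
    have ht : t * (1 + gam 1) = 1 := by
      have h3' : (t * (1 + gam 1) - 1) * c = 0 := by linear_combination h3
      have h := (mul_eq_zero.mp h3').resolve_right hc
      linear_combination h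
    have ht0 : t ≠ 0 := fun h => by rw [h, zero_mul] at ht; exact zero_ne_one ht
    have ht1 : t ≠ 1 := fun h => by
      rw [h, one_mul] at ht
      exact hγ0 1 (by linear_combination ht)
    have hcd : c * d ≠ 0 := by
      intro h
      rcases mul_eq_zero.mp (show t * (t - 1) = 0 by linear_combination h1 - h) with h' | h'
      · exact ht0 h'
      · exact ht1 (by linear_combination h')
    have hd : d ≠ 0 := fun h => hcd (by rw [h, mul_zero])
    have hcv : c = 1 - (1 + gam 2) * t := by
      have h4' : ((1 + gam 2) * t - 1 + c) * d = 0 := by linear_combination h4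
      have h := (mul_eq_zero.mp h4').resolve_right hd
      linear_combination h
    have hg : (gam 1 - gam 0) / (gam 1 - gam 2) * (gam 1 - gam 2) = gam 1 - gam 0 :=
      div_mul_cancel₀ _ hne23
    have hc2 : c * c * (gam 1 - gam 2) = 0 := by
      linear_combination (gam 1 - gam 2) * h2 - (b * c) * hg
        - b * (gam 1 - gam 0) * hcv - b * (gam 0 - gam 2) * ht
    rcases mul_eq_zero.mp hc2 with h | h
    · exact hc (mul_self_eq_zero.mp h)
    · exact hne23 h

end
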